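/- For every k ≥ 1 there exists a graph G of order n = k + 2^k with bdim(G) ≤ k; consequently there exist graphs of order n whose broadcast dimension is O(log n). Concretely, the graph with vertex set {v_1,...,v_k} ∪ {u_b : b ∈ {0,1}^k}, where both sets form cliques and u_b is adjacent to v_j iff the j-th bit of b is 1, has broadcast dimension at most k (achieved by the broadcast assigning 1 to each v_i and 0 elsewhere). -/

import Mathlib

open SimpleGraph Finset

variable {V : Type*}

/-- truncated distance `d_k(x,y) = min(d(x,y), k+1)` with `d = ∞` across components. -/
noncomputable def truncDist (G : SimpleGraph V) (k : ℕ) (x y : V) : ℕ∞ :=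
  min (G.edist x y) (k + 1)

/-- `f` is a resolving broadcast of `G`. -/
def IsResolvingBroadcast (G : SimpleGraph V) (f : V → ℕ) : Prop :=
  ∀ x y : V, x ≠ y → ∃ z : V, 0 < f z ∧ truncDist G (f z) x z ≠ truncDist G (f z) y z

/-- broadcast dimension -/
noncomputable def bdim (G : SimpleGraph V) [Fintype V] : ℕ :=
  sInf {c : ℕ | ∃ f : V → ℕ, IsResolvingBroadcast G f ∧ ∑ v, f v = c}

/-- adjacency resolving set -/
def IsAdjResolvingSet (G : SimpleGraph V) (S : Set V) : Prop :=
  ∀ x y : V, x ≠ y → ∃ z ∈ S, truncDist G 1 x z ≠ truncDist G 1 y z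

/-- adjacency dimension -/
noncomputable def adim (G : SimpleGraph V) [Fintype V] : ℕ :=
  sInf {n : ℕ | ∃ S : Finset V, IsAdjResolvingSet G ↑S ∧ S.card = n}

/-- resolving set (metric dimension) -/
def IsResolvingSet (G : SimpleGraph V) (S : Set V) : Prop :=
  ∀ x y : V, x ≠ y → ∃ z ∈ S, G.edist x z ≠ G.edist y z

/-- metric dimension -/
noncomputable def mdim (G : SimpleGraph V) [Fintype V] : ℕ :=
  sInf {n : ℕ | ∃ S : Finset V, IsResolvingSet G ↑S ∧ S.card = n}

/-- The graph on `Fin k ⊕ (Fin k → Bool)`: both parts are cliques, and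
`u_b` is adjacent to `v_j` iff the `j`-th bit of `b` is `1`. -/
def Bgraph (k : ℕ) : SimpleGraph (Fin k ⊕ (Fin k → Bool)) :=
  SimpleGraph.fromRel (fun a b => match a, b with
    | Sum.inl _, Sum.inl _ => True
    | Sum.inr _, Sum.inr _ => True
    | Sum.inl j, Sum.inr b => b j = true
    | Sum.inr b, Sum.inl j => b j = true)


open scoped Classical in
lemma trunc1 (G : SimpleGraph V) (x z : V) :
    truncDist G 1 x z = if x = z then 0 else if G.Adj x z then 1 else 2 := by
  classical
  have h2 : ((1 : ℕ) : ℕ∞) + 1 = 2 := by norm_num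
  unfold truncDist
  rw [h2]
  split_ifs with h1 hadj
  · subst h1; simp [SimpleGraph.edist_self]
  · rw [(SimpleGraph.edist_eq_one_iff_adj).mpr hadj]; norm_num
  · have hne : G.edist x z ≠ 0 := by
      simp [SimpleGraph.edist_eq_zero_iff, h1]
    have hn1 : G.edist x z ≠ 1 := by
      simpa [SimpleGraph.edist_eq_one_iff_adj] using hadj
    have : 2 ≤ G.edist x z := by
      have : 1 < G.edist x z := lt_of_le_of_ne (ENat.one_le_iff_ne_zero.mpr hne) (Ne.symm hn1)
      exact (ENat.add_one_le_iff ENat.one_ne_top).mpr this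
    exact min_eq_right this

lemma Bgraph_adj (k : ℕ) (a b : Fin k ⊕ (Fin k → Bool)) :
    (Bgraph k).Adj a b ↔ a ≠ b ∧ (match a, b with
    | Sum.inl _, Sum.inl _ => True
    | Sum.inr _, Sum.inr _ => True
    | Sum.inl j, Sum.inr c => c j = true
    | Sum.inr c, Sum.inl j => c j = true) := by
  constructor
  · rintro ⟨hne, h | h⟩ <;> exact ⟨hne, by rcases a with a|a <;> rcases b with b|b <;> simpa using h⟩
  · rintro ⟨hne, h⟩; exact ⟨hne, Or.inl h⟩

theorem stmt_5 (k : ℕ) (hk : 1 ≤ k) :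
    Fintype.card (Fin k ⊕ (Fin k → Bool)) = k + 2 ^ k ∧
    IsResolvingBroadcast (Bgraph k) (Sum.elim (fun _ => 1) (fun _ => 0)) ∧
    bdim (Bgraph k) ≤ k := by
  have hcard : Fintype.card (Fin k ⊕ (Fin k → Bool)) = k + 2 ^ k := by
    simp [Fintype.card_sum]
  have hres : IsResolvingBroadcast (Bgraph k) (Sum.elim (fun _ => 1) (fun _ => 0)) := by
    intro x y hxy
    rcases x with i | a <;> rcases y with j | b
    · refine ⟨Sum.inl i, by norm_num, ?_⟩
      rw [Sum.elim_inl, trunc1, trunc1]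
      have hij : i ≠ j := by simpa using hxy
      have hadj : (Bgraph k).Adj (Sum.inl j) (Sum.inl i) :=
        (Bgraph_adj k _ _).mpr ⟨by simpa using hij.symm, trivial⟩
      simp [hij.symm, hadj]
    · refine ⟨Sum.inl i, by norm_num, ?_⟩
      rw [Sum.elim_inl, trunc1, trunc1, if_pos rfl, if_neg (by simp)]
      split <;> simp
    · refine ⟨Sum.inl j, by norm_num, ?_⟩
      rw [Sum.elim_inl, trunc1, trunc1, if_neg (by simp), if_pos rfl]
      split <;> simp
    · have hab : a ≠ b := by simpa using hxy
      obtain ⟨j, hj⟩ := Function.ne_iff.mp hab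
      refine ⟨Sum.inl j, by norm_num, ?_⟩
      rw [Sum.elim_inl, trunc1, trunc1]
      have h1 : (Sum.inr a : Fin k ⊕ (Fin k → Bool)) ≠ Sum.inl j := by simp
      have h2 : (Sum.inr b : Fin k ⊕ (Fin k → Bool)) ≠ Sum.inl j := by simp
      rw [if_neg h1, if_neg h2]
      have ha : (Bgraph k).Adj (Sum.inr a) (Sum.inl j) ↔ a j = true := by
        rw [Bgraph_adj]; simp
      have hb : (Bgraph k).Adj (Sum.inr b) (Sum.inl j) ↔ b j = true := by
        rw [Bgraph_adj]; simp
      cases hcase : a j with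
      | false =>
        have hb' : b j = true := by
          cases hbj : b j
          · exact absurd (hcase.trans hbj.symm) hj
          · rfl
        rw [if_neg (by simp [ha, hcase]), if_pos (hb.mpr hb')]
        norm_num
      | true =>
        have hb' : b j = false := by
          cases hbj : b j
          · rfl
          · exact absurd (hcase.trans hbj.symm) hj
        rw [if_pos (ha.mpr hcase), if_neg (by simp [hb, hb'])]
        norm_num
  refine ⟨hcard, hres, ?_⟩
  apply Nat.sInf_le
  exact ⟨_, hres, by simp [Fintype.sum_sum_type]⟩
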